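/- Let Ξ = {1,…,n}, let p be a probability mass function on Ξ with the data ξ¹, ξ², … i.i.d. from p, and let p̂_N(j) = (1/N)Σ_{i=1}^N 1[ξ^i = j] be the empirical frequencies. Let (Q_N) be positive reals with Q_N → 0. Then almost surely both of the following hold: (a) every sequence (q_N) of strictly positive probability mass functions on Ξ satisfying Σ_{j=1}^n (q_N(j) − p̂_N(j))²/q_N(j) ≤ Q_N² for all but finitely many N converges to p in total variation (Pearson's χ² test is uniformly consistent); (b) every sequence (q_N) of probability mass functions on Ξ that are strictly positive wherever p̂_N is positive and satisfy 2 Σ_{j=1}^n p̂_N(j) log(p̂_N(j)/q_N(j)) ≤ Q_N² for all but finitely many N converges to p in total variation (the G-test is uniformly consistent), with the convention 0·log 0 = 0. -/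

import Mathlib

open MeasureTheory Filter Topology
open scoped ENNReal

/-- The empirical frequency of category `j` among the first `N` data points. -/
noncomputable def empFreq {n : ℕ} (ξ : ℕ → Fin n) (N : ℕ) (j : Fin n) : ℝ :=
  (∑ i ∈ Finset.range N, if ξ i = j then (1:ℝ) else 0) / N


open MeasureTheory Filter Topology

lemma sq_le_imp {x Q : ℝ} (hx : 0 ≤ x) (hQ : 0 ≤ Q) (h : x^2 ≤ Q^2) : x ≤ Q := by
  nlinarith

lemma tv_le_of_chisq {n : ℕ} (a q : Fin n → ℝ) (hq : ∀ j, 0 < q j) (hq1 : ∑ j, q j = 1)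
    {Q : ℝ} (hQ : 0 ≤ Q) (h : ∑ j, (q j - a j)^2 / q j ≤ Q^2) :
    ∑ j, |q j - a j| ≤ Q := by
  have cs := Finset.sum_sq_le_sum_mul_sum_of_sq_eq_mul Finset.univ
    (r := fun j => |q j - a j|) (f := fun j => (q j - a j)^2 / q j) (g := q)
    (fun j _ => div_nonneg (sq_nonneg _) (hq j).le) (fun j _ => (hq j).le)
    (fun j _ => by rw [sq_abs]; exact (div_mul_cancel₀ _ (ne_of_gt (hq j))).symm)
  rw [hq1, mul_one] at cs
  exact sq_le_imp (Finset.sum_nonneg fun j _ => abs_nonneg _) hQ (le_trans cs h)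

lemma g_pointwise {a q : ℝ} (ha : 0 ≤ a) (hq : 0 ≤ q) (hpos : 0 < a → 0 < q) :
    2 * a - 2 * Real.sqrt (a * q) ≤ a * Real.log (a / q) := by
  rcases eq_or_lt_of_le ha with h0 | h0
  · simp [← h0]
  · have hq' := hpos h0
    have key : Real.log (Real.sqrt (q / a)) ≤ Real.sqrt (q / a) - 1 :=
      Real.log_le_sub_one_of_pos (Real.sqrt_pos.2 (div_pos hq' h0))
    have hlog : Real.log (a / q) = - (2 * Real.log (Real.sqrt (q / a))) := by
      rw [Real.log_sqrt (div_pos hq' h0).le, Real.log_div (ne_of_gt h0) (ne_of_gt hq'),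
        Real.log_div (ne_of_gt hq') (ne_of_gt h0)]
      ring
    have hsq : a * Real.sqrt (q / a) = Real.sqrt (a * q) := by
      rw [show a * q = a^2 * (q / a) by field_simp, Real.sqrt_mul (sq_nonneg a),
        Real.sqrt_sq ha]
    nlinarith [mul_le_mul_of_nonneg_left key h0.le]

lemma tv_le_of_g {n : ℕ} (a q : Fin n → ℝ) (ha0 : ∀ j, 0 ≤ a j) (ha1 : ∑ j, a j = 1)
    (hq0 : ∀ j, 0 ≤ q j) (hq1 : ∑ j, q j = 1) (hpos : ∀ j, 0 < a j → 0 < q j)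
    {Q : ℝ} (hQ : 0 ≤ Q) (h : 2 * ∑ j, a j * Real.log (a j / q j) ≤ Q^2) :
    ∑ j, |q j - a j| ≤ Real.sqrt 2 * Q := by
  set m : Fin n → ℝ := fun j => Real.sqrt (a j * q j) with hm
  have hm0 : ∀ j, 0 ≤ m j := fun j => Real.sqrt_nonneg _
  -- ∑ m ≤ 1
  have hmsum : ∑ j, m j ≤ 1 := by
    have cs := Finset.sum_sq_le_sum_mul_sum_of_sq_eq_mul Finset.univ
      (r := m) (f := a) (g := q) (fun j _ => ha0 j) (fun j _ => hq0 j)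
      (fun j _ => Real.sq_sqrt (mul_nonneg (ha0 j) (hq0 j)))
    rw [ha1, hq1, mul_one] at cs
    have := Finset.sum_nonneg (fun j (_ : j ∈ Finset.univ) => hm0 j)
    nlinarith
  -- KL lower bound
  have hKL : 2 - 2 * ∑ j, m j ≤ ∑ j, a j * Real.log (a j / q j) := by
    have := Finset.sum_le_sum (fun j (_ : j ∈ Finset.univ) =>
      g_pointwise (ha0 j) (hq0 j) (hpos j))
    rw [Finset.sum_sub_distrib, ← Finset.mul_sum, ← Finset.mul_sum, ha1] at this
    linarith
  -- Cauchy-Schwarz for TV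
  have cs2 := Finset.sum_sq_le_sum_mul_sum_of_sq_eq_mul Finset.univ
    (r := fun j => |q j - a j|)
    (f := fun j => (Real.sqrt (a j) - Real.sqrt (q j))^2)
    (g := fun j => (Real.sqrt (a j) + Real.sqrt (q j))^2)
    (fun j _ => sq_nonneg _) (fun j _ => sq_nonneg _)
    (fun j _ => by
      have h1 := Real.sq_sqrt (ha0 j)
      have h2 := Real.sq_sqrt (hq0 j)
      rw [sq_abs, show (Real.sqrt (a j) - Real.sqrt (q j))^2 *
          (Real.sqrt (a j) + Real.sqrt (q j))^2 =
          (Real.sqrt (a j)^2 - Real.sqrt (q j)^2)^2 by ring, h1, h2]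
      ring)
  have hf : ∑ j, (Real.sqrt (a j) - Real.sqrt (q j))^2 = 2 - 2 * ∑ j, m j := by
    have : ∀ j, (Real.sqrt (a j) - Real.sqrt (q j))^2 = a j + q j - 2 * m j := by
      intro j
      have h1 := Real.sq_sqrt (ha0 j)
      have h2 := Real.sq_sqrt (hq0 j)
      have h3 : Real.sqrt (a j) * Real.sqrt (q j) = m j :=
        (Real.sqrt_mul (ha0 j) (q j)).symm
      nlinarith
    simp_rw [this]
    rw [Finset.sum_sub_distrib, Finset.sum_add_distrib, ha1, hq1, ← Finset.mul_sum]
    ring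
  have hg : ∑ j, (Real.sqrt (a j) + Real.sqrt (q j))^2 ≤ 4 := by
    have : ∀ j, (Real.sqrt (a j) + Real.sqrt (q j))^2 = a j + q j + 2 * m j := by
      intro j
      have h1 := Real.sq_sqrt (ha0 j)
      have h2 := Real.sq_sqrt (hq0 j)
      have h3 : Real.sqrt (a j) * Real.sqrt (q j) = m j :=
        (Real.sqrt_mul (ha0 j) (q j)).symm
      nlinarith
    simp_rw [this]
    rw [Finset.sum_add_distrib, Finset.sum_add_distrib, ha1, hq1, ← Finset.mul_sum]
    linarith
  have hS : 0 ≤ 2 - 2 * ∑ j, m j := by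
    rw [← hf]; exact Finset.sum_nonneg fun j _ => sq_nonneg _
  have hbound : (∑ j, |q j - a j|)^2 ≤ 2 * Q^2 := by
    calc (∑ j, |q j - a j|)^2
        ≤ (∑ j, (Real.sqrt (a j) - Real.sqrt (q j))^2) *
            ∑ j, (Real.sqrt (a j) + Real.sqrt (q j))^2 := cs2
      _ ≤ (2 - 2 * ∑ j, m j) * 4 := by rw [hf]; exact mul_le_mul_of_nonneg_left hg hS
      _ ≤ 2 * Q^2 := by nlinarith
  have h2 : (Real.sqrt 2 * Q)^2 = 2 * Q^2 := by
    rw [mul_pow, Real.sq_sqrt (by norm_num : (0:ℝ) ≤ 2)]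
  exact sq_le_imp (Finset.sum_nonneg fun j _ => abs_nonneg _)
    (mul_nonneg (Real.sqrt_nonneg _) hQ) (by rw [h2]; exact hbound)

lemma empFreq_nonneg {n : ℕ} (ξ : ℕ → Fin n) (N : ℕ) (j : Fin n) :
    0 ≤ empFreq ξ N j :=
  div_nonneg (Finset.sum_nonneg fun i _ => by positivity) (Nat.cast_nonneg N)

lemma empFreq_sum {n : ℕ} (ξ : ℕ → Fin n) {N : ℕ} (hN : 1 ≤ N) :
    ∑ j, empFreq ξ N j = 1 := by
  unfold empFreq
  rw [← Finset.sum_div, Finset.sum_comm]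
  have : ∀ i ∈ Finset.range N, (∑ j, if ξ i = j then (1:ℝ) else 0) = 1 := by
    intro i _
    rw [Finset.sum_ite_eq]
    simp
  rw [Finset.sum_congr rfl this, Finset.sum_const, Finset.card_range, nsmul_eq_mul, mul_one,
    div_self (by positivity : ((N:ℝ)) ≠ 0)]

lemma slln_empFreq {n : ℕ} {Ω : Type*} [MeasurableSpace Ω]
    (P : Measure Ω) [IsProbabilityMeasure P]
    (p : Fin n → ℝ) (hp0 : ∀ j, 0 ≤ p j)
    (ξ : ℕ → Ω → Fin n) (hξmeas : ∀ i, Measurable (ξ i))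
    (hiid : ProbabilityTheory.iIndepFun ξ P)
    (hdist : ∀ i j, P {ω | ξ i ω = j} = ENNReal.ofReal (p j)) (j : Fin n) :
    ∀ᵐ ω ∂P, Tendsto (fun N => empFreq (fun i => ξ i ω) N j) atTop (𝓝 (p j)) := by
  set f : Fin n → ℝ := fun x => if x = j then 1 else 0 with hf
  set X : ℕ → Ω → ℝ := fun i ω => f (ξ i ω) with hX
  have hfmeas : Measurable f := measurable_of_countable f
  have hident : ∀ i, ProbabilityTheory.IdentDistrib (X i) (X 0) P P := by
    intro i
    have hξid : ProbabilityTheory.IdentDistrib (ξ i) (ξ 0) P P := by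
      refine ⟨(hξmeas i).aemeasurable, (hξmeas 0).aemeasurable, ?_⟩
      apply MeasureTheory.Measure.ext_of_singleton
      intro k
      rw [Measure.map_apply (hξmeas i) (measurableSet_singleton k),
        Measure.map_apply (hξmeas 0) (measurableSet_singleton k)]
      have : ∀ (l : ℕ), ξ l ⁻¹' {k} = {ω | ξ l ω = k} := fun l => rfl
      rw [this, this, hdist i k, hdist 0 k]
    exact hξid.comp hfmeas
  have hindep : Pairwise (Function.onFun (ProbabilityTheory.IndepFun · · P) X) := by
    intro i k hik
    exact (hiid.indepFun hik).comp hfmeas hfmeas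
  have hXind : X 0 = Set.indicator {ω | ξ 0 ω = j} (fun _ => (1:ℝ)) := by
    ext ω
    by_cases h : ξ 0 ω = j <;> simp [hX, hf, h, Set.indicator]
  have hmeasset : MeasurableSet {ω | ξ 0 ω = j} :=
    (hξmeas 0) (measurableSet_singleton j)
  have hint : Integrable (X 0) P := by
    rw [hXind]
    exact (integrable_const (1:ℝ)).indicator hmeasset
  have hexp : ∫ ω, X 0 ω ∂P = p j := by
    rw [hXind, integral_indicator_const (1:ℝ) hmeasset, measureReal_def, hdist 0 j, smul_eq_mul, mul_one,
      ENNReal.toReal_ofReal (hp0 j)]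
  have := ProbabilityTheory.strong_law_ae_real X hint hindep hident
  rw [hexp] at this
  filter_upwards [this] with ω hω
  exact hω

/-- uniform consistency of Pearson's χ² test and of the G-test on a
known finite support.  Let the data be i.i.d. from a probability mass function `p` on
`{1,…,n}` and let `Q_N → 0` be positive thresholds.  Then almost surely:
(a) every sequence of strictly positive pmfs `q_N` with χ² statistic
`∑_j (q_N(j) − p̂_N(j))²/q_N(j) ≤ Q_N²` for all but finitely many `N` converges to `p`
in total variation; and
(b) every sequence of pmfs `q_N`, strictly positive wherever `p̂_N` is, with G statistic
`2 ∑_j p̂_N(j) log(p̂_N(j)/q_N(j)) ≤ Q_N²` for all but finitely many `N` converges to `p`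
in total variation (with the convention `0·log 0 = 0`). -/
theorem stmt10 {n : ℕ} {Ω : Type*} [MeasurableSpace Ω]
    (P : Measure Ω) [IsProbabilityMeasure P]
    (p : Fin n → ℝ) (hp0 : ∀ j, 0 ≤ p j) (hp1 : ∑ j, p j = 1)
    -- i.i.d. data with distribution `p`
    (ξ : ℕ → Ω → Fin n) (hξmeas : ∀ i, Measurable (ξ i))
    (hiid : ProbabilityTheory.iIndepFun ξ P)
    (hdist : ∀ i j, P {ω | ξ i ω = j} = ENNReal.ofReal (p j))
    -- positive thresholds tending to zero
    (Q : ℕ → ℝ) (hQpos : ∀ N, 0 < Q N) (hQ0 : Tendsto Q atTop (𝓝 0)) :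
    ∀ᵐ ω ∂P,
      -- (a) Pearson's χ² test is uniformly consistent
      (∀ q : ℕ → Fin n → ℝ, (∀ N j, 0 < q N j) → (∀ N, ∑ j, q N j = 1) →
        (∀ᶠ N in atTop, ∑ j, (q N j - empFreq (fun i => ξ i ω) N j)^2 / q N j ≤ (Q N)^2) →
        Tendsto (fun N => (∑ j, |q N j - p j|) / 2) atTop (𝓝 0)) ∧
      -- (b) the G-test is uniformly consistent
      (∀ q : ℕ → Fin n → ℝ, (∀ N j, 0 ≤ q N j) → (∀ N, ∑ j, q N j = 1) →
        (∀ N j, 0 < empFreq (fun i => ξ i ω) N j → 0 < q N j) →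
        (∀ᶠ N in atTop, 2 * ∑ j, empFreq (fun i => ξ i ω) N j *
            Real.log (empFreq (fun i => ξ i ω) N j / q N j) ≤ (Q N)^2) →
        Tendsto (fun N => (∑ j, |q N j - p j|) / 2) atTop (𝓝 0)) := by
  have key : ∀ᵐ ω ∂P, ∀ j, Tendsto (fun N => empFreq (fun i => ξ i ω) N j) atTop (𝓝 (p j)) :=
    ae_all_iff.2 (fun j => slln_empFreq P p hp0 ξ hξmeas hiid hdist j)
  filter_upwards [key] with ω hω
  have hph : Tendsto (fun N => ∑ j, |empFreq (fun i => ξ i ω) N j - p j|) atTop (𝓝 0) := by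
    have h1 : ∀ j : Fin n, Tendsto (fun N => |empFreq (fun i => ξ i ω) N j - p j|)
        atTop (𝓝 0) := fun j => by
      simpa using ((hω j).sub (tendsto_const_nhds (x := p j))).abs
    simpa using tendsto_finset_sum Finset.univ (fun j (_ : j ∈ Finset.univ) => h1 j)
  have main : ∀ (q : ℕ → Fin n → ℝ) (c : ℝ), 0 ≤ c →
      (∀ᶠ N in atTop, ∑ j, |q N j - empFreq (fun i => ξ i ω) N j| ≤ c * Q N) →
      Tendsto (fun N => (∑ j, |q N j - p j|) / 2) atTop (𝓝 0) := by
    intro q c hc hb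
    have h1 : Tendsto (fun N => c * Q N + ∑ j, |empFreq (fun i => ξ i ω) N j - p j|)
        atTop (𝓝 0) := by
      simpa using (hQ0.const_mul c).add hph
    have h2 : Tendsto (fun N => ∑ j, |q N j - p j|) atTop (𝓝 0) := by
      refine squeeze_zero'
        (Eventually.of_forall fun N => Finset.sum_nonneg fun j _ => abs_nonneg _) ?_ h1
      filter_upwards [hb] with N hN
      calc ∑ j, |q N j - p j|
          ≤ ∑ j, (|q N j - empFreq (fun i => ξ i ω) N j|
              + |empFreq (fun i => ξ i ω) N j - p j|) :=
            Finset.sum_le_sum fun j _ => abs_sub_le _ _ _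
        _ = (∑ j, |q N j - empFreq (fun i => ξ i ω) N j|)
              + ∑ j, |empFreq (fun i => ξ i ω) N j - p j| := Finset.sum_add_distrib
        _ ≤ c * Q N + ∑ j, |empFreq (fun i => ξ i ω) N j - p j| := by linarith
    simpa using h2.div_const 2
  constructor
  · intro q hqpos hq1 hchi
    refine main q 1 zero_le_one ?_
    filter_upwards [hchi] with N hN
    rw [one_mul]
    exact tv_le_of_chisq (empFreq (fun i => ξ i ω) N) (q N) (hqpos N) (hq1 N)
      (hQpos N).le hN
  · intro q hq0 hq1 hqpos hg
    refine main q (Real.sqrt 2) (Real.sqrt_nonneg 2) ?_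
    filter_upwards [hg, eventually_ge_atTop 1] with N hN hN1
    exact tv_le_of_g (empFreq (fun i => ξ i ω) N) (q N)
      (empFreq_nonneg _ N) (empFreq_sum _ hN1) (hq0 N) (hq1 N) (hqpos N)
      (hQpos N).le hN
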